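/- Let A be an algebra with a system of local units S = {e_λ}_{λ∈Λ}. Then the category of unital left A-modules is equivalent to the category of modules over the k-category C^S(A), whose objects are Λ and whose morphism spaces are C^S(A)(α,β) = e_β A e_α. One functor sends a unital A-module M to {e_λ M}; the quasi-inverse sends a C^S(A)-module {M_λ} to the direct limit of the system (M_λ, I_{(λ,α)}) where I_{(λ,α)} = e_λ·_{(λ,α)}(−) for e_λ ≤ e_α. -/

import Mathlib

open CategoryTheory

section UModPrelude

variable (k : Type) [Field k]

/-- A unital left module over a `k`-module `R` equipped with a bilinear (possibly
nonunital) multiplication `m`. -/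
structure UMod (R : Type) [AddCommGroup R] [Module k R] (m : R →ₗ[k] R →ₗ[k] R) where
  carrier : Type
  [acg : AddCommGroup carrier]
  [mod : Module k carrier]
  act : R →ₗ[k] carrier →ₗ[k] carrier
  act_mul : ∀ (r s : R) (x : carrier), act (m r s) x = act r (act s x)
  unital : ∀ x : carrier,
    x ∈ Submodule.span k {y : carrier | ∃ (r : R) (x' : carrier), y = act r x'}

attribute [instance] UMod.acg UMod.mod

variable {R : Type} [AddCommGroup R] [Module k R] (m : R →ₗ[k] R →ₗ[k] R)

instance : Category (UMod k R m) where
  Hom M N := {f : M.carrier →ₗ[k] N.carrier //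
    ∀ (r : R) (x : M.carrier), f (M.act r x) = N.act r (f x)}
  id M := ⟨LinearMap.id, fun _ _ => rfl⟩
  comp f g := ⟨g.1.comp f.1, fun r x => by simp [LinearMap.comp_apply, f.2, g.2]⟩
  id_comp f := Subtype.ext (by ext x; rfl)
  comp_id f := Subtype.ext (by ext x; rfl)
  assoc f g h := Subtype.ext (by ext x; rfl)

end UModPrelude

section Stmt16

variable (k : Type) [Field k]
variable (A : Type) [NonUnitalRing A] [Module k A] [SMulCommClass k A A] [IsScalarTower k A A]

/-- `S` is a system of local units for the algebra `A`. -/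
def IsSLU (S : Set A) : Prop :=
  (∀ e ∈ S, e * e = e) ∧
    ∀ F : Finset A, ∃ e ∈ S, ∀ a ∈ F, e * a = a ∧ a * e = a

/-- The corner `e_β A e_α`, the space of morphisms `α → β` in the category `C^S(A)`. -/
noncomputable def corner (β α : A) : Submodule k A :=
  LinearMap.range ((LinearMap.mulLeft k β).comp (LinearMap.mulRight k α))

variable (S : Set A)

/-- A module over the `k`-category `C^S(A)` (a `k`-linear functor `C^S(A) → Vec`). -/
structure CSMod where
  M : ↥S → Type
  [acg : ∀ e : ↥S, AddCommGroup (M e)]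
  [mod : ∀ e : ↥S, Module k (M e)]
  act : ∀ α β : ↥S, ↥(corner k A (β : A) (α : A)) →ₗ[k] M α →ₗ[k] M β
  act_id : ∀ (α : ↥S) (hα : ((α : A)) ∈ corner k A (α : A) (α : A)) (x : M α),
    act α α ⟨(α : A), hα⟩ x = x
  act_comp : ∀ (α β γ : ↥S) (f : ↥(corner k A (γ : A) (β : A)))
    (g : ↥(corner k A (β : A) (α : A))) (fg : ↥(corner k A (γ : A) (α : A))),
    (fg : A) = (f : A) * (g : A) →
    ∀ x : M α, act α γ fg x = act β γ f (act α β g x)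

attribute [instance] CSMod.acg CSMod.mod

open CategoryTheory in
noncomputable instance : Category (CSMod k A S) where
  Hom M N := {φ : ∀ e : ↥S, M.M e →ₗ[k] N.M e //
    ∀ (α β : ↥S) (f : ↥(corner k A (β : A) (α : A))) (x : M.M α),
      φ β (M.act α β f x) = N.act α β f (φ α x)}
  id M := ⟨fun _ => LinearMap.id, fun _ _ _ _ => rfl⟩
  comp φ ψ := ⟨fun e => (ψ.1 e).comp (φ.1 e), fun α β f x => by
    simp [LinearMap.comp_apply, φ.2, ψ.2]⟩
  id_comp φ := Subtype.ext (by funext e; ext x; rfl)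
  comp_id φ := Subtype.ext (by funext e; ext x; rfl)
  assoc φ ψ χ := Subtype.ext (by funext e; ext x; rfl)


section AuxConstruction
open CategoryTheory

variable {k : Type} [Field k]
variable {A : Type} [NonUnitalRing A] [Module k A] [SMulCommClass k A A] [IsScalarTower k A A]
variable {S : Set A}

theorem mem_corner {β α x : A} (h1 : β * x = x) (h2 : x * α = x) :
    x ∈ corner k A β α :=
  ⟨x, by
    simp only [LinearMap.coe_comp, Function.comp_apply, LinearMap.mulRight_apply,
      LinearMap.mulLeft_apply]
    rw [h2, h1]⟩

theorem corner_mul_left {β α x : A} (hβ : β * β = β) (hx : x ∈ corner k A β α) :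
    β * x = x := by
  obtain ⟨a, rfl⟩ := hx
  simp only [LinearMap.coe_comp, Function.comp_apply, LinearMap.mulRight_apply,
    LinearMap.mulLeft_apply]
  rw [← mul_assoc, hβ]

theorem corner_mul_right {β α x : A} (hα : α * α = α) (hx : x ∈ corner k A β α) :
    x * α = x := by
  obtain ⟨a, rfl⟩ := hx
  simp only [LinearMap.coe_comp, Function.comp_apply, LinearMap.mulRight_apply,
    LinearMap.mulLeft_apply]
  rw [mul_assoc β (a * α) α, mul_assoc a α α, hα]

/-- The idempotents in a set `S` of an algebra, index category for the direct limit. -/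
abbrev SIdem (S : Set A) : Type := {e : A // e ∈ S ∧ e * e = e}

instance SIdem.instPreorder : Preorder (SIdem S) where
  le e f := (f.1 : A) * e.1 = e.1 ∧ (e.1 : A) * f.1 = e.1
  le_refl e := ⟨e.2.2, e.2.2⟩
  le_trans e f g h1 h2 := by
    constructor
    · conv_lhs => rw [← h1.1]
      rw [← mul_assoc, h2.1, h1.1]
    · conv_lhs => rw [← h1.2]
      rw [mul_assoc, h2.2, h1.2]

noncomputable def sidecEq : DecidableEq (SIdem S) := Classical.decEq _

attribute [local instance] sidecEq

variable (S) in
/-- Forget idempotency. -/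
def toS (e : SIdem S) : ↥S := ⟨e.1, e.2.1⟩

theorem le_def {e f : SIdem S} : e ≤ f ↔ (f.1 * e.1 = e.1 ∧ e.1 * f.1 = e.1) := Iff.rfl

theorem mem_corner_of_le {e f : SIdem S} (h : e ≤ f) :
    (e.1 : A) ∈ corner k A (f.1 : A) (e.1 : A) :=
  mem_corner h.1 e.2.2

/-- Transition maps of the directed system attached to a `C^S(A)`-module. -/
noncomputable def tr (M : CSMod k A S) (e f : SIdem S) (h : e ≤ f) :
    M.M (toS S e) →ₗ[k] M.M (toS S f) :=
  M.act (toS S e) (toS S f) ⟨e.1, mem_corner_of_le h⟩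

theorem trDS (M : CSMod k A S) : DirectedSystem (fun e => M.M (toS S e)) (fun e f h => tr M e f h) := by
  constructor
  · intro e x
    exact M.act_id (toS S e) _ x
  · intro e3 e2 e1 h12 h23 x
    exact (M.act_comp (toS S e1) (toS S e2) (toS S e3) ⟨e2.1, mem_corner_of_le h23⟩
      ⟨e1.1, mem_corner_of_le h12⟩ ⟨e1.1, mem_corner_of_le (h12.trans h23)⟩
      (by exact h12.1.symm) x).symm

attribute [local instance] trDS

/-- The direct limit of the directed system attached to a `C^S(A)`-module. -/
noncomputable def GLim (M : CSMod k A S) : Type :=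
  Module.DirectLimit (fun e => M.M (toS S e)) (tr M)

noncomputable instance (M : CSMod k A S) : AddCommGroup (GLim M) :=
  inferInstanceAs (AddCommGroup (Module.DirectLimit (fun e => M.M (toS S e)) (tr M)))

noncomputable instance (M : CSMod k A S) : Module k (GLim M) :=
  inferInstanceAs (Module k (Module.DirectLimit (fun e => M.M (toS S e)) (tr M)))

/-- Canonical map into the direct limit. -/
noncomputable def glof (M : CSMod k A S) (e : SIdem S) : M.M (toS S e) →ₗ[k] GLim M :=
  Module.DirectLimit.of k (SIdem S) (fun e => M.M (toS S e)) (tr M) e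

theorem glof_tr (M : CSMod k A S) {e f : SIdem S} (h : e ≤ f) (x : M.M (toS S e)) :
    glof M f (tr M e f h x) = glof M e x :=
  Module.DirectLimit.of_f

/-- The universal property of the direct limit. -/
noncomputable def glift (M : CSMod k A S) {P : Type} [AddCommGroup P] [Module k P]
    (g : ∀ e : SIdem S, M.M (toS S e) →ₗ[k] P)
    (Hg : ∀ e f (h : e ≤ f) x, g f (tr M e f h x) = g e x) : GLim M →ₗ[k] P :=
  Module.DirectLimit.lift k (SIdem S) (fun e => M.M (toS S e)) (tr M) g Hg

theorem glift_glof (M : CSMod k A S) {P : Type} [AddCommGroup P] [Module k P]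
    (g : ∀ e : SIdem S, M.M (toS S e) →ₗ[k] P)
    (Hg : ∀ e f (h : e ≤ f) x, g f (tr M e f h x) = g e x) (e : SIdem S) (x) :
    glift M g Hg (glof M e x) = g e x :=
  Module.DirectLimit.lift_of g Hg x

section WithSLU
variable (hS : IsSLU A S)
include hS

theorem slu_directed : IsDirected (SIdem S) (· ≤ ·) := by
  constructor
  intro e f
  haveI := Classical.decEq A
  obtain ⟨g, hgS, hg⟩ := hS.2 {e.1, f.1}
  have he := hg e.1 (by simp)
  have hf := hg f.1 (by simp)
  exact ⟨⟨g, hgS, hS.1 g hgS⟩, ⟨he.1, he.2⟩, ⟨hf.1, hf.2⟩⟩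

theorem slu_nonempty : Nonempty (SIdem S) := by
  obtain ⟨g, hgS, -⟩ := hS.2 ∅
  exact ⟨⟨g, hgS, hS.1 g hgS⟩⟩

theorem glim_induction {M : CSMod k A S} {C : GLim M → Prop} (z : GLim M)
    (ih : ∀ e x, C (glof M e x)) : C z := by
  haveI := slu_directed hS
  haveI := slu_nonempty hS
  exact Module.DirectLimit.induction_on z ih

theorem glim_exists_of {M : CSMod k A S} (z : GLim M) : ∃ e x, glof M e x = z := by
  haveI := slu_directed hS
  haveI := slu_nonempty hS
  exact Module.DirectLimit.exists_of z

/-- A local unit dominating a given element. -/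
noncomputable def pick (a : A) : SIdem S :=
  ⟨(hS.2 {a}).choose, (hS.2 {a}).choose_spec.1, hS.1 _ (hS.2 {a}).choose_spec.1⟩

theorem pick_spec (a : A) : (pick hS a).1 * a = a ∧ a * (pick hS a).1 = a :=
  (hS.2 {a}).choose_spec.2 a (Finset.mem_singleton_self a)

omit hS in
theorem mul_idem_right (a : A) (e : SIdem S) : (a * e.1) * e.1 = a * e.1 := by
  rw [mul_assoc, e.2.2]

theorem pick_mem_corner (a : A) (e : SIdem S) :
    a * e.1 ∈ corner k A (pick hS (a * e.1)).1 e.1 :=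
  mem_corner (pick_spec hS _).1 (mul_idem_right a e)

/-- Action of `a : A` on the component at `e` of the direct limit. -/
noncomputable def actAux (M : CSMod k A S) (a : A) (e : SIdem S) :
    M.M (toS S e) →ₗ[k] GLim M :=
  (glof M (pick hS (a * e.1))).comp
    (M.act (toS S e) (toS S (pick hS (a * e.1))) ⟨a * e.1, pick_mem_corner hS a e⟩)

omit hS in
theorem actAux_eq_step (M : CSMod k A S) (a : A) (e f g : SIdem S)
    (hf : f.1 * (a * e.1) = a * e.1) (h : f ≤ g)
    (memf : a * e.1 ∈ corner k A f.1 e.1) (memg : a * e.1 ∈ corner k A g.1 e.1)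
    (x : M.M (toS S e)) :
    glof M f (M.act (toS S e) (toS S f) ⟨a * e.1, memf⟩ x) =
      glof M g (M.act (toS S e) (toS S g) ⟨a * e.1, memg⟩ x) := by
  have hcomp := M.act_comp (toS S e) (toS S f) (toS S g)
    ⟨f.1, mem_corner_of_le h⟩ ⟨a * e.1, memf⟩ ⟨a * e.1, memg⟩ (by exact hf.symm) x
  rw [hcomp]
  exact (glof_tr M h _).symm

omit hS in
theorem g_absorb {a : A} {f g : SIdem S} (hf : f.1 * a = a) (h : f ≤ g) :
    g.1 * a = a := by
  conv_lhs => rw [← hf]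
  rw [← mul_assoc, h.1, hf]

theorem actAux_eq (M : CSMod k A S) (a : A) (e f : SIdem S)
    (hf : f.1 * (a * e.1) = a * e.1) (mem : a * e.1 ∈ corner k A f.1 e.1)
    (x : M.M (toS S e)) :
    actAux hS M a e x =
      glof M f (M.act (toS S e) (toS S f) ⟨a * e.1, mem⟩ x) := by
  haveI := slu_directed hS
  obtain ⟨g, hg1, hg2⟩ := exists_ge_ge (pick hS (a * e.1)) f
  have hga : g.1 * (a * e.1) = a * e.1 := g_absorb hf hg2
  have memg : a * e.1 ∈ corner k A g.1 e.1 := mem_corner hga (mul_idem_right a e)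
  have h1 := actAux_eq_step M a e (pick hS (a * e.1)) g (pick_spec hS _).1 hg1
    (pick_mem_corner hS a e) memg x
  have h2 := actAux_eq_step M a e f g hf hg2 mem memg x
  exact h1.trans h2.symm

theorem actAux_apply (M : CSMod k A S) (a : A) (e : SIdem S) (x : M.M (toS S e)) :
    actAux hS M a e x = glof M (pick hS (a * e.1))
      (M.act (toS S e) (toS S (pick hS (a * e.1))) ⟨a * e.1, pick_mem_corner hS a e⟩ x) :=
  rfl

theorem actAux_add (M : CSMod k A S) (a b : A) (e : SIdem S) (x : M.M (toS S e)) :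
    actAux hS M (a + b) e x = actAux hS M a e x + actAux hS M b e x := by
  haveI := Classical.decEq A
  obtain ⟨f0, hf0S, hf0⟩ := hS.2 {a * e.1, b * e.1}
  set f : SIdem S := ⟨f0, hf0S, hS.1 _ hf0S⟩ with hfdef
  have ha : f.1 * (a * e.1) = a * e.1 := (hf0 (a * e.1) (by simp)).1
  have hb : f.1 * (b * e.1) = b * e.1 := (hf0 (b * e.1) (by simp)).1
  have hab : f.1 * ((a + b) * e.1) = (a + b) * e.1 := by
    rw [add_mul, mul_add, ha, hb]
  have mema := mem_corner (k := k) ha (mul_idem_right a e)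
  have memb := mem_corner (k := k) hb (mul_idem_right b e)
  have memab := mem_corner (k := k) hab (mul_idem_right (a + b) e)
  rw [actAux_eq hS M (a + b) e f hab memab, actAux_eq hS M a e f ha mema,
    actAux_eq hS M b e f hb memb]
  rw [show (⟨(a + b) * e.1, memab⟩ : ↥(corner k A (toS S f : A) (toS S e : A))) =
      ⟨a * e.1, mema⟩ + ⟨b * e.1, memb⟩ from Subtype.ext (add_mul a b e.1)]
  rw [map_add, LinearMap.add_apply, map_add]

theorem actAux_smul (M : CSMod k A S) (c : k) (a : A) (e : SIdem S) (x : M.M (toS S e)) :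
    actAux hS M (c • a) e x = c • actAux hS M a e x := by
  set f := pick hS (a * e.1) with hfdef
  have ha : f.1 * (a * e.1) = a * e.1 := (pick_spec hS _).1
  have hca : f.1 * ((c • a) * e.1) = (c • a) * e.1 := by
    rw [smul_mul_assoc c a e.1, mul_smul_comm c f.1 (a * e.1), ha]
  have mema := pick_mem_corner (k := k) hS a e
  have memca := mem_corner (k := k) hca (mul_idem_right (c • a) e)
  rw [actAux_eq hS M (c • a) e f hca memca, actAux_apply]
  rw [show (⟨(c • a) * e.1, memca⟩ : ↥(corner k A (toS S f : A) (toS S e : A))) =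
      c • ⟨a * e.1, mema⟩ from Subtype.ext (smul_mul_assoc c a e.1)]
  rw [map_smul, LinearMap.smul_apply, map_smul]

theorem actAux_tr (M : CSMod k A S) (a : A) (e e' : SIdem S) (h : e ≤ e')
    (x : M.M (toS S e)) :
    actAux hS M a e' (tr M e e' h x) = actAux hS M a e x := by
  show actAux hS M a e' (M.act (toS S e) (toS S e') ⟨e.1, mem_corner_of_le h⟩ x) =
    actAux hS M a e x
  set f := pick hS (a * e'.1) with hfdef
  have hkey : a * e.1 = (a * e'.1) * e.1 := by rw [mul_assoc, h.1]
  have hf : f.1 * (a * e.1) = a * e.1 := by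
    rw [hkey, ← mul_assoc, (pick_spec hS _).1]
  have mem : a * e.1 ∈ corner k A f.1 e.1 := mem_corner hf (mul_idem_right a e)
  rw [actAux_apply]
  rw [← M.act_comp (toS S e) (toS S e') (toS S f) ⟨a * e'.1, pick_mem_corner hS a e'⟩
    ⟨e.1, mem_corner_of_le h⟩ ⟨a * e.1, mem⟩ (by exact hkey) x]
  exact (actAux_eq hS M a e f hf mem x).symm

/-- Action of a fixed `a : A` on the direct limit. -/
noncomputable def gAct1 (M : CSMod k A S) (a : A) : GLim M →ₗ[k] GLim M :=
  glift M (actAux hS M a) (fun e f h x => actAux_tr hS M a e f h x)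

theorem gAct1_glof (M : CSMod k A S) (a : A) (e : SIdem S) (x : M.M (toS S e)) :
    gAct1 hS M a (glof M e x) = actAux hS M a e x :=
  glift_glof M _ _ e x

/-- The bilinear action of `A` on the direct limit. -/
noncomputable def gAct (M : CSMod k A S) : A →ₗ[k] GLim M →ₗ[k] GLim M :=
  LinearMap.mk₂ k (fun a z => gAct1 hS M a z)
    (fun a b z => by
      refine glim_induction (C := fun w => gAct1 hS M (a + b) w =
        gAct1 hS M a w + gAct1 hS M b w) hS z ?_
      intro e x
      rw [gAct1_glof, gAct1_glof, gAct1_glof, actAux_add])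
    (fun c a z => by
      refine glim_induction (C := fun w => gAct1 hS M (c • a) w = c • gAct1 hS M a w)
        hS z ?_
      intro e x
      rw [gAct1_glof, gAct1_glof, actAux_smul])
    (fun a z w => map_add _ z w)
    (fun c a z => map_smul _ c z)

theorem gAct_glof (M : CSMod k A S) (a : A) (e : SIdem S) (x : M.M (toS S e)) :
    gAct hS M a (glof M e x) = actAux hS M a e x :=
  gAct1_glof hS M a e x

theorem gAct_mul (M : CSMod k A S) (r s : A) (z : GLim M) :
    gAct hS M (r * s) z = gAct hS M r (gAct hS M s z) := by
  refine glim_induction (C := fun w => gAct hS M (r * s) w = gAct hS M r (gAct hS M s w))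
    hS z ?_
  intro e x
  rw [gAct_glof, gAct_glof, actAux_apply hS M s e, gAct_glof]
  set f := pick hS (s * e.1) with hfdef
  rw [actAux_apply hS M r f]
  set g := pick hS (r * f.1) with hgdef
  have hval : (r * s) * e.1 = (r * f.1) * (s * e.1) := by
    rw [mul_assoc r f.1, (pick_spec hS (s * e.1)).1, ← mul_assoc]
  have hg : g.1 * ((r * s) * e.1) = (r * s) * e.1 := by
    rw [hval, ← mul_assoc g.1, (pick_spec hS (r * f.1)).1]
  have mem : (r * s) * e.1 ∈ corner k A g.1 e.1 := mem_corner hg (mul_idem_right (r * s) e)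
  rw [← M.act_comp (toS S e) (toS S f) (toS S g) ⟨r * f.1, pick_mem_corner hS r f⟩
    ⟨s * e.1, pick_mem_corner hS s e⟩ ⟨(r * s) * e.1, mem⟩ (by exact hval) x]
  exact actAux_eq hS M (r * s) e g hg mem x

theorem gAct_self (M : CSMod k A S) (e : SIdem S) (x : M.M (toS S e)) :
    gAct hS M e.1 (glof M e x) = glof M e x := by
  rw [gAct_glof]
  have he : e.1 * e.1 = e.1 := e.2.2
  have hf : e.1 * (e.1 * e.1) = e.1 * e.1 := by rw [he]; exact he
  have mem : e.1 * e.1 ∈ corner k A e.1 e.1 := mem_corner hf (mul_idem_right e.1 e)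
  rw [actAux_eq hS M e.1 e e hf mem x]
  have mem' : (e.1 : A) ∈ corner k A e.1 e.1 := mem_corner he he
  rw [show (⟨e.1 * e.1, mem⟩ : ↥(corner k A (toS S e : A) (toS S e : A))) = ⟨e.1, mem'⟩ from Subtype.ext he]
  exact congrArg _ (M.act_id (toS S e) mem' x)

theorem gAct_unital (M : CSMod k A S) (z : GLim M) :
    z ∈ Submodule.span k {y : GLim M | ∃ (r : A) (x' : GLim M), y = gAct hS M r x'} := by
  obtain ⟨e, x, rfl⟩ := glim_exists_of hS z
  exact Submodule.subset_span ⟨e.1, glof M e x, (gAct_self hS M e x).symm⟩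

/-- The unital `A`-module attached to a `C^S(A)`-module: object part of the
quasi-inverse functor. -/
noncomputable def GU (M : CSMod k A S) : UMod k A (LinearMap.mul k A) where
  carrier := GLim M
  act := gAct hS M
  act_mul r s x := by
    rw [show (LinearMap.mul k A) r s = r * s from rfl]
    exact gAct_mul hS M r s x
  unital := gAct_unital hS M

omit hS in
/-- The map of direct limits induced by a morphism of `C^S(A)`-modules. -/
noncomputable def gMap {M N : CSMod k A S} (φ : M ⟶ N) : GLim M →ₗ[k] GLim N :=
  glift M (fun e => (glof N e).comp (φ.1 (toS S e))) (fun e f h x => by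
    show glof N f (φ.1 (toS S f) (tr M e f h x)) = glof N e (φ.1 (toS S e) x)
    have h2 : φ.1 (toS S f) (tr M e f h x) = tr N e f h (φ.1 (toS S e) x) :=
      φ.2 (toS S e) (toS S f) ⟨e.1, mem_corner_of_le h⟩ x
    rw [h2, glof_tr])

omit hS in
theorem gMap_glof {M N : CSMod k A S} (φ : M ⟶ N) (e : SIdem S) (x : M.M (toS S e)) :
    gMap φ (glof M e x) = glof N e (φ.1 (toS S e) x) :=
  glift_glof M _ _ e x

theorem gMap_gAct {M N : CSMod k A S} (φ : M ⟶ N) (a : A) (z : GLim M) :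
    gMap φ (gAct hS M a z) = gAct hS N a (gMap φ z) := by
  refine glim_induction (C := fun w => gMap φ (gAct hS M a w) = gAct hS N a (gMap φ w))
    hS z ?_
  intro e x
  rw [gAct_glof, actAux_apply, gMap_glof, gMap_glof, gAct_glof,
    actAux_apply hS N a e]
  exact congrArg _ (φ.2 (toS S e) (toS S (pick hS (a * e.1)))
    ⟨a * e.1, pick_mem_corner (k := k) hS a e⟩ x)

/-- The quasi-inverse functor, sending a `C^S(A)`-module to the direct limit. -/
noncomputable def GFun : CSMod k A S ⥤ UMod k A (LinearMap.mul k A) where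
  obj M := GU hS M
  map {M N} φ := ⟨gMap φ, fun r z => gMap_gAct hS φ r z⟩
  map_id M := Subtype.ext (LinearMap.ext fun z => by
    refine glim_induction (C := fun w => gMap (𝟙 M) w = w) hS z ?_
    intro e x
    rw [gMap_glof]
    rfl)
  map_comp {X Y Z} φ ψ := Subtype.ext (LinearMap.ext fun z => by
    refine glim_induction
      (C := fun w => gMap (φ ≫ ψ) w = gMap ψ (gMap φ w)) hS z ?_
    intro e x
    rw [gMap_glof, gMap_glof, gMap_glof]
    rfl)

/-- The submodule `e·M` of a unital module, realized as fixed points of `M.act e`. -/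
noncomputable def floc (M : UMod k A (LinearMap.mul k A)) (e : ↥S) :
    Submodule k M.carrier :=
  LinearMap.eqLocus (M.act (e : A)) LinearMap.id

omit hS in
theorem mem_floc {M : UMod k A (LinearMap.mul k A)} {e : ↥S} {x : M.carrier} :
    x ∈ floc M e ↔ M.act (e : A) x = x :=
  Iff.rfl

theorem floc_res {M : UMod k A (LinearMap.mul k A)} {α β : ↥S}
    (c : ↥(corner k A (β : A) (α : A))) :
    ∀ x ∈ floc M α, M.act c.1 x ∈ floc M β := by
  intro x _
  have hβc : (β : A) * c.1 = c.1 := corner_mul_left (hS.1 β β.2) c.2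
  have h := M.act_mul (β : A) c.1 x
  rw [show (LinearMap.mul k A) (β : A) c.1 = (β : A) * c.1 from rfl, hβc] at h
  exact mem_floc.2 h.symm

/-- The functor sending a unital module `M` to the family `e ↦ e·M`: object part. -/
noncomputable def FObj (M : UMod k A (LinearMap.mul k A)) : CSMod k A S where
  M e := ↥(floc M e)
  act α β :=
    { toFun := fun c => (M.act c.1).restrict (floc_res hS c)
      map_add' := fun c d => LinearMap.ext fun x => Subtype.ext (by
        show M.act (c.1 + d.1) x.1 = M.act c.1 x.1 + M.act d.1 x.1
        rw [map_add, LinearMap.add_apply])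
      map_smul' := fun r c => LinearMap.ext fun x => Subtype.ext (by
        show M.act (r • c.1) x.1 = r • M.act c.1 x.1
        rw [map_smul, LinearMap.smul_apply]) }
  act_id α hα x := Subtype.ext x.2
  act_comp α β γ f g fg hfg x := Subtype.ext (by
    show M.act fg.1 x.1 = M.act f.1 (M.act g.1 x.1)
    rw [hfg]
    exact M.act_mul f.1 g.1 x.1)

theorem fobj_act_apply (M : UMod k A (LinearMap.mul k A)) (α β : ↥S)
    (c : ↥(corner k A (β : A) (α : A))) (x : ↥(floc M α)) :
    (((FObj hS M).act α β c) x).1 = M.act c.1 x.1 := rfl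

/-- The functor sending a unital module to the corresponding `C^S(A)`-module. -/
noncomputable def FFun : UMod k A (LinearMap.mul k A) ⥤ CSMod k A S where
  obj M := FObj hS M
  map {M N} f := ⟨fun e => f.1.restrict (p := floc M e) (q := floc N e) (fun x hx => by
      rw [mem_floc] at hx ⊢
      rw [← f.2 (e : A) x, hx]),
    fun α β c x => Subtype.ext (f.2 c.1 x.1)⟩
  map_id M := Subtype.ext (funext fun e => LinearMap.ext fun x => Subtype.ext rfl)
  map_comp f g := Subtype.ext (funext fun e => LinearMap.ext fun x => Subtype.ext rfl)

/-- Evaluation of the direct limit of the `e·M` back into `M`. -/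
noncomputable def ev (M : UMod k A (LinearMap.mul k A)) :
    GLim (FObj hS M) →ₗ[k] M.carrier :=
  glift (FObj hS M) (fun e => (floc M (toS S e)).subtype) (fun e f h x => x.2)

theorem ev_glof (M : UMod k A (LinearMap.mul k A)) (e : SIdem S)
    (x : (FObj hS M).M (toS S e)) : ev hS M (glof (FObj hS M) e x) = x.1 :=
  glift_glof (FObj hS M) _ _ e x

theorem ev_gAct (M : UMod k A (LinearMap.mul k A)) (a : A) (z : GLim (FObj hS M)) :
    ev hS M (gAct hS (FObj hS M) a z) = M.act a (ev hS M z) := by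
  refine glim_induction
    (C := fun w => ev hS M (gAct hS (FObj hS M) a w) = M.act a (ev hS M w)) hS z ?_
  intro e x
  rw [gAct_glof, actAux_apply, ev_glof, ev_glof]
  show M.act (a * e.1) x.1 = M.act a x.1
  have h := M.act_mul a e.1 x.1
  rw [show (LinearMap.mul k A) a e.1 = a * e.1 from rfl] at h
  rw [h]
  exact congrArg (M.act a) x.2

theorem ev_inj (M : UMod k A (LinearMap.mul k A)) : Function.Injective (ev hS M) := by
  have key : ∀ z, ev hS M z = 0 → z = 0 := by
    intro z hz
    obtain ⟨e, x, rfl⟩ := glim_exists_of hS z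
    rw [ev_glof] at hz
    rw [show x = 0 from Subtype.ext hz, map_zero]
  intro z w h
  exact sub_eq_zero.mp (key (z - w) (by rw [map_sub, h, sub_self]))

theorem ev_surj (M : UMod k A (LinearMap.mul k A)) : Function.Surjective (ev hS M) := by
  intro x
  have hsub : {y : M.carrier | ∃ r x', y = M.act r x'} ⊆
      ↑(LinearMap.range (ev hS M)) := by
    rintro y ⟨r, x', rfl⟩
    set p := pick hS r with hpdef
    have hp : p.1 * r = r := (pick_spec hS r).1
    have hmem : M.act r x' ∈ floc M (toS S p) := by
      rw [mem_floc]
      have h := M.act_mul p.1 r x'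
      rw [show (LinearMap.mul k A) p.1 r = p.1 * r from rfl, hp] at h
      exact h.symm
    exact ⟨glof (FObj hS M) p ⟨M.act r x', hmem⟩, ev_glof hS M p _⟩
  have hx := Submodule.span_le.mpr hsub (M.unital x)
  exact hx

/-- `ev` as a linear equivalence. -/
noncomputable def evEquiv (M : UMod k A (LinearMap.mul k A)) :
    GLim (FObj hS M) ≃ₗ[k] M.carrier :=
  LinearEquiv.ofBijective (ev hS M) ⟨ev_inj hS M, ev_surj hS M⟩

theorem ev_symm_apply (M : UMod k A (LinearMap.mul k A)) (z : GLim (FObj hS M)) :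
    (evEquiv hS M).symm (ev hS M z) = z :=
  (evEquiv hS M).symm_apply_apply z

theorem ev_apply_symm (M : UMod k A (LinearMap.mul k A)) (x : M.carrier) :
    ev hS M ((evEquiv hS M).symm x) = x :=
  (evEquiv hS M).apply_symm_apply x

theorem ev_gMap {M N : UMod k A (LinearMap.mul k A)} (f : M ⟶ N)
    (z : GLim (FObj hS M)) :
    ev hS N (gMap ((FFun hS).map f) z) = f.1 (ev hS M z) := by
  refine glim_induction
    (C := fun w => ev hS N (gMap ((FFun hS).map f) w) = f.1 (ev hS M w)) hS z ?_
  intro e x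
  rw [gMap_glof]
  exact (ev_glof hS N e _).trans (congrArg f.1 (ev_glof hS M e x)).symm

/-- The component at `M` of the unit isomorphism. -/
noncomputable def unitIsoApp (M : UMod k A (LinearMap.mul k A)) :
    M ≅ (FFun hS ⋙ GFun hS).obj M where
  hom := ⟨(evEquiv hS M).symm.toLinearMap, by
    intro r x
    apply ev_inj hS M
    have h1 : ev hS M ((evEquiv hS M).symm (M.act r x)) = M.act r x :=
      ev_apply_symm hS M _
    have h2 : ev hS M (gAct hS (FObj hS M) r ((evEquiv hS M).symm x)) = M.act r x := by
      rw [ev_gAct]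
      exact congrArg (M.act r) (ev_apply_symm hS M x)
    exact h1.trans h2.symm⟩
  inv := ⟨ev hS M, fun r z => ev_gAct hS M r z⟩
  hom_inv_id := Subtype.ext (LinearMap.ext fun x => ev_apply_symm hS M x)
  inv_hom_id := Subtype.ext (LinearMap.ext fun z => ev_symm_apply hS M z)

/-- The unit isomorphism. -/
noncomputable def unitIso :
    Functor.id (UMod k A (LinearMap.mul k A)) ≅ FFun hS ⋙ GFun hS :=
  NatIso.ofComponents (fun M => unitIsoApp hS M) (by
    intro M N f
    apply Subtype.ext
    apply LinearMap.ext
    intro x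
    apply ev_inj hS N
    show ev hS N ((evEquiv hS N).symm (f.1 x)) =
      ev hS N (gMap ((FFun hS).map f) ((evEquiv hS M).symm x))
    rw [ev_apply_symm, ev_gMap]
    exact (congrArg f.1 (ev_apply_symm hS M x)).symm)

omit hS in
theorem prmem (f g : SIdem S) : g.1 * f.1 ∈ corner k A g.1 f.1 :=
  mem_corner (by rw [← mul_assoc, g.2.2]) (mul_idem_right g.1 f)

omit hS in
/-- Projection of the direct limit onto the component at `g`. -/
noncomputable def pr (M : CSMod k A S) (g : SIdem S) : GLim M →ₗ[k] M.M (toS S g) :=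
  glift M (fun f => M.act (toS S f) (toS S g) ⟨g.1 * f.1, prmem f g⟩)
    (fun f f' h x => by
      show M.act (toS S f') (toS S g) ⟨g.1 * f'.1, prmem f' g⟩
          (M.act (toS S f) (toS S f') ⟨f.1, mem_corner_of_le h⟩ x) =
        M.act (toS S f) (toS S g) ⟨g.1 * f.1, prmem f g⟩ x
      exact (M.act_comp (toS S f) (toS S f') (toS S g) ⟨g.1 * f'.1, prmem f' g⟩
        ⟨f.1, mem_corner_of_le h⟩ ⟨g.1 * f.1, prmem f g⟩
        (by rw [mul_assoc, h.1]) x).symm)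

omit hS in
theorem pr_glof (M : CSMod k A S) (g f : SIdem S) (x : M.M (toS S f)) :
    pr M g (glof M f x) = M.act (toS S f) (toS S g) ⟨g.1 * f.1, prmem f g⟩ x :=
  glift_glof M _ _ f x

omit hS in
theorem pr_glof_self (M : CSMod k A S) (g : SIdem S) (x : M.M (toS S g)) :
    pr M g (glof M g x) = x := by
  rw [pr_glof]
  have mem' : (g.1 : A) ∈ corner k A g.1 g.1 := mem_corner g.2.2 g.2.2
  rw [show (⟨g.1 * g.1, prmem g g⟩ : ↥(corner k A (toS S g : A) (toS S g : A))) = ⟨g.1, mem'⟩ from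
    Subtype.ext g.2.2]
  exact M.act_id (toS S g) mem' x

theorem glof_pr (M : CSMod k A S) (g : SIdem S) (z : GLim M) :
    glof M g (pr M g z) = gAct hS M g.1 z := by
  refine glim_induction (C := fun w => glof M g (pr M g w) = gAct hS M g.1 w) hS z ?_
  intro f x
  rw [pr_glof, gAct_glof]
  have hf : g.1 * (g.1 * f.1) = g.1 * f.1 := by rw [← mul_assoc, g.2.2]
  exact (actAux_eq hS M g.1 f g hf (prmem f g) x).symm

theorem pr_gMap {M N : CSMod k A S} (φ : M ⟶ N) (g : SIdem S) (z : GLim M) :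
    pr N g (gMap φ z) = φ.1 (toS S g) (pr M g z) := by
  refine glim_induction
    (C := fun w => pr N g (gMap φ w) = φ.1 (toS S g) (pr M g w)) hS z ?_
  intro f x
  rw [gMap_glof, pr_glof, pr_glof]
  exact (φ.2 (toS S f) (toS S g) ⟨g.1 * f.1, prmem f g⟩ x).symm

/-- The inclusion `↥S → SIdem S` given by a system of local units. -/
def toI (e : ↥S) : SIdem S := ⟨e.1, e.2, hS.1 e.1 e.2⟩

theorem pr_gAct (M : CSMod k A S) (α β : ↥S) (c : ↥(corner k A (β : A) (α : A)))
    (z : GLim M) (hz : gAct hS M (α : A) z = z) :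
    pr M (toI hS β) (gAct hS M c.1 z) = M.act α β c (pr M (toI hS α) z) := by
  obtain ⟨y, hy⟩ : ∃ y, z = glof M (toI hS α) y :=
    ⟨pr M (toI hS α) z, by rw [glof_pr hS M]; exact hz.symm⟩
  rw [hy, pr_glof_self, gAct_glof]
  have hval : c.1 * (toI hS α).1 = c.1 := corner_mul_right (hS.1 α.1 α.2) c.2
  have hf : (toI hS β).1 * (c.1 * (toI hS α).1) = c.1 * (toI hS α).1 := by
    rw [hval]
    exact corner_mul_left (hS.1 β.1 β.2) c.2
  have mem : c.1 * (toI hS α).1 ∈ corner k A (toI hS β).1 (toI hS α).1 :=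
    mem_corner hf (mul_idem_right c.1 (toI hS α))
  rw [actAux_eq hS M c.1 (toI hS α) (toI hS β) hf mem y, pr_glof_self]
  exact congrArg (fun u : ↥(corner k A (β : A) (α : A)) => M.act α β u y)
    (Subtype.ext hval)

theorem glof_act (M : CSMod k A S) (α β : ↥S) (c : ↥(corner k A (β : A) (α : A)))
    (x : M.M α) :
    glof M (toI hS β) (M.act α β c x) = gAct hS M c.1 (glof M (toI hS α) x) := by
  refine Eq.trans ?_ (gAct_glof hS M c.1 (toI hS α) x).symm
  have hval : c.1 * (toI hS α).1 = c.1 := corner_mul_right (hS.1 α.1 α.2) c.2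
  have hf : (toI hS β).1 * (c.1 * (toI hS α).1) = c.1 * (toI hS α).1 := by
    rw [hval]
    exact corner_mul_left (hS.1 β.1 β.2) c.2
  have mem : c.1 * (toI hS α).1 ∈ corner k A (toI hS β).1 (toI hS α).1 :=
    mem_corner hf (mul_idem_right c.1 (toI hS α))
  rw [actAux_eq hS M c.1 (toI hS α) (toI hS β) hf mem x]
  exact congrArg (glof M (toI hS β))
    ((congrArg (fun u : ↥(corner k A (β : A) (α : A)) => M.act α β u x)
      (Subtype.ext hval)).symm)

theorem glof_mem_floc (M : CSMod k A S) (e : ↥S) (x : M.M e) :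
    glof M (toI hS e) x ∈ floc (GU hS M) e :=
  mem_floc.2 (gAct_self hS M (toI hS e) x)

/-- The component at `M` of the counit isomorphism. -/
noncomputable def counitIsoApp (M : CSMod k A S) : (GFun hS ⋙ FFun hS).obj M ≅ M where
  hom := ⟨fun e => (pr M (toI hS e)).comp (Submodule.subtype (floc (GU hS M) e)),
    fun α β c x => pr_gAct hS M α β c x.1 x.2⟩
  inv := ⟨fun e => LinearMap.codRestrict (floc (GU hS M) e) (glof M (toI hS e))
      (fun x => glof_mem_floc hS M e x),
    fun α β c x => Subtype.ext (glof_act hS M α β c x)⟩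
  hom_inv_id := Subtype.ext (funext fun e => LinearMap.ext fun z => Subtype.ext (by
    show glof M (toI hS e) (pr M (toI hS e) z.1) = z.1
    refine (glof_pr hS M (toI hS e) z.1).trans ?_
    exact z.2))
  inv_hom_id := Subtype.ext (funext fun e => LinearMap.ext fun x =>
    pr_glof_self M (toI hS e) x)

/-- The counit isomorphism. -/
noncomputable def counitIso : GFun hS ⋙ FFun hS ≅ Functor.id (CSMod k A S) :=
  NatIso.ofComponents (fun M => counitIsoApp hS M) (by
    intro M N φ
    apply Subtype.ext
    funext e
    apply LinearMap.ext
    intro z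
    show pr N (toI hS e) (gMap φ z.1) = φ.1 e (pr M (toI hS e) z.1)
    exact pr_gMap hS φ (toI hS e) z.1)

/-- The equivalence of categories. -/
noncomputable def theEquivalence :
    (UMod k A (LinearMap.mul k A)) ≌ CSMod k A S :=
  CategoryTheory.Equivalence.mk (FFun hS) (GFun hS) (unitIso hS) (counitIso hS)

end WithSLU


end AuxConstruction

/-- Let `A` be an algebra with a system of local units `S`.  Then the
category of unital left `A`-modules is equivalent to the category of modules over the
`k`-category `C^S(A)` whose objects are the local units and whose morphism spaces are the
corners `e_β A e_α`. -/
theorem unital_modules_equiv_CS_modules (hS : IsSLU A S) :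
    Nonempty ((UMod k A (LinearMap.mul k A)) ≌ CSMod k A S) := by
  exact ⟨theEquivalence hS⟩

end Stmt16
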